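/- arXiv:1705.04640 — 4 statements merged into one kernel-verified Lean document; each statement's English description precedes it below -/
import Mathlib

section
/- Let k ≥ 4 be an integer, and let R ⊆ ℝ^k be a set of red points such that no two red points are at distance exactly 1 from each other. If there exists an integer d with 2 ≤ d ≤ k+1 and two red points at distance exactly d from each other, then there exist a point p ∈ ℝ^k and a vector v ∈ ℝ^k with ‖v‖ = 1 such that the points p + i·v for i = 0, 1, …, k+2 are all blue (not in R). -/
open RealInnerProductSpace Finset

/-- Pigeonhole: if `T ⊆ U` with `T.card + 1 = U.card`, any two elements of `U \ T` agree. -/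
lemma pigeon_aux {U T : Finset ℕ} {a b : ℕ} (hT : T ⊆ U) (hcard : T.card + 1 = U.card)
    (ha : a ∈ U) (hb : b ∈ U) (haT : a ∉ T) (hbT : b ∉ T) : a = b := by
  have hcard' : (U \ T).card = 1 := by
    rw [Finset.card_sdiff_of_subset hT]; omega
  obtain ⟨c, hc⟩ := Finset.card_eq_one.mp hcard'
  have ha' : a ∈ U \ T := Finset.mem_sdiff.mpr ⟨ha, haT⟩
  have hb' : b ∈ U \ T := Finset.mem_sdiff.mpr ⟨hb, hbT⟩
  rw [hc, Finset.mem_singleton] at ha' hb'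
  rw [ha', hb']

/-- A regular simplex of `q+1` unit vectors with pairwise inner product `-1/q`,
built inside the span of an orthonormal family of size `q`. -/
lemma simplex_family {F : Type*} [NormedAddCommGroup F] [InnerProductSpace ℝ F]
    (q : ℕ) (hq : 1 ≤ q) (G : Fin q → F) (hG : Orthonormal ℝ G) :
    ∃ Y : Fin (q + 1) → F,
      (∀ j, ‖Y j‖ = 1) ∧
      (∀ i j, i ≠ j → ⟪Y i, Y j⟫ = -1 / (q : ℝ)) ∧
      (∀ (x : F), (∀ t, ⟪x, G t⟫ = 0) → ∀ j, ⟪x, Y j⟫ = 0) := by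
  classical
  set Q : ℝ := (q : ℝ) with hQ
  have hQ1 : (1 : ℝ) ≤ Q := by rw [hQ]; exact_mod_cast hq
  have hQ0 : (0 : ℝ) < Q := by linarith
  set sqq : ℝ := Real.sqrt Q with hsqq
  set rq1 : ℝ := Real.sqrt (Q + 1) with hrq1
  have hsqq0 : 0 < sqq := Real.sqrt_pos.mpr hQ0
  have hsqq2 : sqq ^ 2 = Q := Real.sq_sqrt hQ0.le
  have hrq12 : rq1 ^ 2 = Q + 1 := Real.sq_sqrt (by linarith)
  set α : ℝ := rq1 / sqq with hα
  set β : ℝ := (1 - rq1) / Q with hβ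
  set S : F := ∑ t, G t with hS
  -- inner products with S
  have hGS : ∀ t, ⟪G t, S⟫ = 1 := by
    intro t
    rw [hS, inner_sum]
    rw [Finset.sum_eq_single t]
    · rw [real_inner_self_eq_norm_sq, hG.1 t]; norm_num
    · intro b _ hb; exact hG.2 (Ne.symm hb)
    · intro h; exact absurd (Finset.mem_univ t) h
  have hSG : ∀ t, ⟪S, G t⟫ = 1 := fun t => by rw [real_inner_comm]; exact hGS t
  have hSS : ⟪S, S⟫ = Q := by
    rw [hS, sum_inner]
    rw [Finset.sum_congr rfl (fun t _ => hGS t)]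
    simp [hQ]
  -- scalar identities
  have hsqqne : sqq ≠ 0 := ne_of_gt hsqq0
  have hQne : Q ≠ 0 := ne_of_gt hQ0
  set γ : ℝ := β / sqq with hγ
  have hαγ : 2 * (α * γ) + γ ^ 2 * Q = -1 / Q := by
    rw [hα, hγ, hβ, ← hsqq2]
    field_simp
    linear_combination (-1 : ℝ) * hrq12 + hsqq2
  have hα2 : α ^ 2 = (Q + 1) / Q := by
    rw [hα, div_pow, hrq12, hsqq2]
  have hlast : α + γ * Q = sqq / Q := by
    rw [hα, hγ, hβ, ← hsqq2]
    field_simp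
    ring
  -- the simplex
  refine ⟨fun j => if h : (j : ℕ) < q then α • G ⟨j, h⟩ + γ • S else (-sqq⁻¹) • S,
    ?_, ?_, ?_⟩
  · -- unit norms
    intro j
    have h1 : ‖(if h : (j : ℕ) < q then α • G ⟨j, h⟩ + γ • S else (-sqq⁻¹) • S)‖ ^ 2 = 1 := by
      rw [← real_inner_self_eq_norm_sq]
      by_cases h : (j : ℕ) < q
      · rw [dif_pos h]
        have hGG : ⟪G ⟨j, h⟩, G ⟨j, h⟩⟫ = 1 := by
          rw [real_inner_self_eq_norm_sq, hG.1 _]; norm_num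
        simp only [inner_add_left, inner_add_right, real_inner_smul_left, real_inner_smul_right,
          hGG, hGS, hSG, hSS]
        have e : α * (α * 1) + α * (γ * 1) + (γ * (α * 1) + γ * (γ * Q)) =
            α ^ 2 + (2 * (α * γ) + γ ^ 2 * Q) := by ring
        rw [e, hαγ, hα2]
        field_simp
        ring
      · rw [dif_neg h]
        simp only [real_inner_smul_left, real_inner_smul_right, hSS]
        rw [← hsqq2]
        field_simp
    nlinarith [norm_nonneg (if h : (j : ℕ) < q then α • G ⟨j, h⟩ + γ • S else (-sqq⁻¹) • S), h1]
  · -- pairwise inner products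
    intro i j hij
    by_cases hi : (i : ℕ) < q <;> by_cases hj : (j : ℕ) < q
    · simp only [dif_pos hi, dif_pos hj]
      have hGG : ⟪G ⟨i, hi⟩, G ⟨j, hj⟩⟫ = 0 := by
        apply hG.2
        simp only [ne_eq, Fin.mk.injEq]
        intro hc
        exact hij (Fin.ext hc)
      simp only [inner_add_left, inner_add_right, real_inner_smul_left, real_inner_smul_right,
        hGG, hGS, hSG, hSS]
      have e : α * (α * 0) + α * (γ * 1) + (γ * (α * 1) + γ * (γ * Q)) =
          2 * (α * γ) + γ ^ 2 * Q := by ring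
      rw [e, hαγ]
    · simp only [dif_pos hi, dif_neg hj]
      simp only [inner_add_left, real_inner_smul_left, real_inner_smul_right, hGS, hSS]
      have e : -sqq⁻¹ * (α * 1) + -sqq⁻¹ * (γ * Q) = -sqq⁻¹ * (α + γ * Q) := by ring
      rw [e, hlast, ← hsqq2]
      field_simp
    · simp only [dif_neg hi, dif_pos hj]
      simp only [inner_add_right, real_inner_smul_left, real_inner_smul_right, hSG, hSS]
      have e : α * (-sqq⁻¹ * 1) + γ * (-sqq⁻¹ * Q) = -sqq⁻¹ * (α + γ * Q) := by ring
      rw [e, hlast, ← hsqq2]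
      field_simp
    · exfalso
      apply hij
      have hi' : (i : ℕ) = q := by omega
      have hj' : (j : ℕ) = q := by omega
      exact Fin.ext (hi'.trans hj'.symm)
  · -- orthogonality transfer
    intro x hx j
    have hxS : ⟪x, S⟫ = 0 := by
      rw [hS, inner_sum]
      exact Finset.sum_eq_zero fun t _ => hx t
    by_cases h : (j : ℕ) < q
    · simp only [dif_pos h]
      simp only [inner_add_right, real_inner_smul_right, hx _, hxS]
      ring
    · simp only [dif_neg h]
      simp only [real_inner_smul_right, hxS]
      ring

section DistLemmas

variable {E : Type*} [NormedAddCommGroup E] [InnerProductSpace ℝ E]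

lemma norm_eq_one_of_sq {A : E} (h : ‖A‖ ^ 2 = 1) : ‖A‖ = 1 := by
  nlinarith [norm_nonneg A]

lemma dist_base_one (x v w : E) (s c : ℝ) (hv : ‖v‖ = 1) (hw : ‖w‖ = 1)
    (hvw : ⟪v, w⟫ = 0) (h : s ^ 2 + c ^ 2 = 1) :
    dist (x + s • v + c • w) x = 1 := by
  rw [dist_eq_norm]
  have e : x + s • v + c • w - x = s • v + c • w := by abel
  rw [e]
  apply norm_eq_one_of_sq
  rw [← real_inner_self_eq_norm_sq]
  have h1 : ⟪v, v⟫ = 1 := by rw [real_inner_self_eq_norm_sq, hv]; norm_num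
  have h2 : ⟪w, w⟫ = 1 := by rw [real_inner_self_eq_norm_sq, hw]; norm_num
  have h3 : ⟪w, v⟫ = 0 := by rw [real_inner_comm]; exact hvw
  simp only [inner_add_left, inner_add_right, real_inner_smul_left, real_inner_smul_right,
    h1, h2, h3, hvw]
  linear_combination h

lemma dist_base_one' (x v w : E) (s t c : ℝ) (hv : ‖v‖ = 1) (hw : ‖w‖ = 1)
    (hvw : ⟪v, w⟫ = 0) (h : (s - t) ^ 2 + c ^ 2 = 1) :
    dist (x + s • v + c • w) (x + t • v) = 1 := by
  have e : x + s • v + c • w = (x + t • v) + (s - t) • v + c • w := by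
    rw [sub_smul]; abel
  rw [e]
  exact dist_base_one _ _ _ _ _ hv hw hvw h

lemma dist_pair_one (a w w' : E) (c : ℝ) (hw : ‖w‖ = 1) (hw' : ‖w'‖ = 1)
    (h13 : ⟪w, w'⟫ = 1 / 3) (hc : c ^ 2 = 3 / 4) :
    dist (a + c • w) (a + c • w') = 1 := by
  rw [dist_eq_norm]
  have e : a + c • w - (a + c • w') = c • w - c • w' := by abel
  rw [e]
  apply norm_eq_one_of_sq
  rw [← real_inner_self_eq_norm_sq]
  have h1 : ⟪w, w⟫ = 1 := by rw [real_inner_self_eq_norm_sq, hw]; norm_num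
  have h2 : ⟪w', w'⟫ = 1 := by rw [real_inner_self_eq_norm_sq, hw']; norm_num
  have h3 : ⟪w', w⟫ = 1 / 3 := by rw [real_inner_comm]; exact h13
  simp only [inner_sub_left, inner_sub_right, real_inner_smul_left, real_inner_smul_right,
    h1, h2, h3, h13]
  linear_combination (4 / 3 : ℝ) * hc

lemma inner_combo3 {f0 f1 f2 : E} (h00 : ⟪f0, f0⟫ = 1) (h11 : ⟪f1, f1⟫ = 1)
    (h22 : ⟪f2, f2⟫ = 1) (h01 : ⟪f0, f1⟫ = 0) (h02 : ⟪f0, f2⟫ = 0) (h12 : ⟪f1, f2⟫ = 0)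
    (p0 p1 p2 r0 r1 r2 : ℝ) :
    ⟪p0 • f0 + p1 • f1 + p2 • f2, r0 • f0 + r1 • f1 + r2 • f2⟫ = p0 * r0 + p1 * r1 + p2 * r2 := by
  have h10 : ⟪f1, f0⟫ = 0 := by rw [real_inner_comm]; exact h01
  have h20 : ⟪f2, f0⟫ = 0 := by rw [real_inner_comm]; exact h02
  have h21 : ⟪f2, f1⟫ = 0 := by rw [real_inner_comm]; exact h12
  simp only [inner_add_left, inner_add_right, real_inner_smul_left, real_inner_smul_right,
    h00, h11, h22, h01, h02, h12, h10, h20, h21]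
  ring

end DistLemmas

open Module

set_option maxHeartbeats 2000000 in
/-- Lemma 2.3: for `k ≥ 4`, if no two red points of `ℝ^k` are at distance 1, but some two red
points are at distance `d` for an integer `2 ≤ d ≤ k+1`, then there is a blue `ℓ_{k+3}`. -/
theorem blue_line_of_red_integer_distance (k : ℕ) (hk : 4 ≤ k)
    (R : Set (EuclideanSpace ℝ (Fin k)))
    (hR : ¬∃ x ∈ R, ∃ y ∈ R, dist x y = 1)
    (hd : ∃ d : ℕ, 2 ≤ d ∧ d ≤ k + 1 ∧ ∃ x ∈ R, ∃ y ∈ R, dist x y = (d : ℝ)) :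
    ∃ p v : EuclideanSpace ℝ (Fin k), ‖v‖ = 1 ∧
      ∀ i : ℕ, i ≤ k + 2 → p + (i : ℝ) • v ∉ R := by
  by_contra hcon
  push_neg at hcon
  obtain ⟨d, hd2, hdk, x, hx, y, hy, hxy⟩ := hd
  -- basic real facts
  have hK4 : (4 : ℝ) ≤ (k : ℝ) := by exact_mod_cast hk
  have hD2 : (2 : ℝ) ≤ (d : ℝ) := by exact_mod_cast hd2
  have hDne : (d : ℝ) ≠ 0 := by positivity
  -- the unit vector v pointing from x to y
  have hyxne : ‖y - x‖ = (d : ℝ) := by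
    rw [← dist_eq_norm, dist_comm]; exact hxy
  set v : EuclideanSpace ℝ (Fin k) := ((d : ℝ))⁻¹ • (y - x) with hvdef
  have hvnorm : ‖v‖ = 1 := by
    rw [hvdef, norm_smul, hyxne]
    simp [abs_of_pos (show (0:ℝ) < ((d:ℝ))⁻¹ by positivity)]
    exact inv_mul_cancel₀ hDne
  have hyx : y = x + (d : ℝ) • v := by
    rw [hvdef, smul_smul, mul_inv_cancel₀ hDne, one_smul]
    abel
  have hv0 : v ≠ 0 := by
    intro h; rw [h, norm_zero] at hvnorm; norm_num at hvnorm
  -- orthonormal family spanning the orthogonal complement of v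
  haveI : Fact (finrank ℝ (EuclideanSpace ℝ (Fin k)) = (k - 1) + 1) := ⟨by
    rw [finrank_euclideanSpace, Fintype.card_fin]; omega⟩
  set B := OrthonormalBasis.fromOrthogonalSpanSingleton (𝕜 := ℝ) (k - 1) hv0 with hBdef
  set f : Fin (k - 1) → EuclideanSpace ℝ (Fin k) := fun i => ((B i : (ℝ ∙ v)ᗮ) : EuclideanSpace ℝ (Fin k)) with hfdef
  have hf : Orthonormal ℝ f := B.orthonormal.comp_linearIsometry (ℝ ∙ v)ᗮ.subtypeₗᵢ
  have hfv : ∀ i, ⟪v, f i⟫ = 0 := by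
    intro i
    have hmem : f i ∈ (ℝ ∙ v)ᗮ := (B i).2
    exact (Submodule.mem_orthogonal (ℝ ∙ v) (f i)).mp hmem v
      (Submodule.mem_span_singleton_self v)
  have hff : ∀ i j, i ≠ j → ⟪f i, f j⟫ = 0 := fun i j hij => hf.2 hij
  have hfnorm : ∀ i, ‖f i‖ = 1 := hf.1
  -- scalars
  set K : ℝ := (k : ℝ) with hKdef
  set μ : ℝ := -(K + 4) / (3 * K) with hμdef
  have hKne : K ≠ 0 := by positivity
  have hμsq : μ ^ 2 ≤ 2 / 3 := by
    rw [hμdef, div_pow]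
    rw [div_le_div_iff₀ (by positivity) (by norm_num)]
    nlinarith [hK4]
  -- window points
  set c3 : ℝ := Real.sqrt 3 / 2 with hc3def
  have hc3sq : c3 ^ 2 = 3 / 4 := by
    rw [hc3def, div_pow, Real.sq_sqrt (by norm_num : (3:ℝ) ≥ 0)]
    norm_num
  set P : ℕ → EuclideanSpace ℝ (Fin k) → EuclideanSpace ℝ (Fin k) :=
    fun i w => (x + ((i : ℝ) - 1 / 2) • v) + c3 • w with hPdef
  -- the allowed slot set
  set U : Finset ℕ := Finset.range (k + 3) \ {0, 1, d, d + 1} with hUdef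
  have hUcard : U.card = k - 1 := by
    rw [hUdef]
    rw [Finset.card_sdiff_of_subset]
    · have h4 : ({0, 1, d, d + 1} : Finset ℕ).card = 4 := by
        rw [Finset.card_insert_of_notMem (by
            simp only [Finset.mem_insert, Finset.mem_singleton]; omega),
          Finset.card_insert_of_notMem (by
            simp only [Finset.mem_insert, Finset.mem_singleton]; omega),
          Finset.card_insert_of_notMem (by simp only [Finset.mem_singleton]; omega),
          Finset.card_singleton]
      rw [h4, Finset.card_range]
      omega
    · intro a ha
      simp only [Finset.mem_insert, Finset.mem_singleton] at ha
      simp only [Finset.mem_range]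
      omega
  -- slot existence
  have slot : ∀ w : EuclideanSpace ℝ (Fin k), ‖w‖ = 1 → ⟪v, w⟫ = 0 → ∃ i, i ∈ U ∧ P i w ∈ R := by
    intro w hw hvw
    obtain ⟨i, hik, hiR⟩ := hcon (x + (-(1 / 2) : ℝ) • v + c3 • w) v hvnorm
    have hPeq : x + (-(1 / 2) : ℝ) • v + c3 • w + (i : ℝ) • v = P i w := by
      simp only [hPdef]
      have e : ((i : ℝ) - 1 / 2) • v = (i : ℝ) • v + (-(1 / 2) : ℝ) • v := by
        rw [← add_smul]; ring_nf
      rw [e]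
      abel
    rw [hPeq] at hiR
    refine ⟨i, ?_, hiR⟩
    rw [hUdef]
    simp only [Finset.mem_sdiff, Finset.mem_range, Finset.mem_insert, Finset.mem_singleton]
    refine ⟨by omega, ?_⟩
    rintro (rfl | rfl | rfl | rfl)
    · -- i = 0 : distance 1 from x
      refine hR ⟨_, hiR, x, hx, ?_⟩
      simp only [hPdef]
      exact dist_base_one x v w _ _ hvnorm hw hvw
        (by rw [hc3sq]; push_cast; ring_nf)
    · -- i = 1
      refine hR ⟨_, hiR, x, hx, ?_⟩
      simp only [hPdef]
      exact dist_base_one x v w _ _ hvnorm hw hvw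
        (by rw [hc3sq]; push_cast; ring_nf)
    · -- i = d : distance 1 from y
      refine hR ⟨_, hiR, y, hy, ?_⟩
      simp only [hPdef]
      rw [hyx]
      exact dist_base_one' x v w _ _ _ hvnorm hw hvw
        (by rw [hc3sq]; push_cast; ring_nf)
    · -- i = d + 1
      refine hR ⟨_, hiR, y, hy, ?_⟩
      simp only [hPdef]
      rw [hyx]
      exact dist_base_one' x v w _ _ _ hvnorm hw hvw
        (by rw [hc3sq]; push_cast; ring_nf)
  choose σ hσU hσR using slot
  -- two 1/3-inner-product vectors cannot have the same slot
  have key : ∀ (w w' : EuclideanSpace ℝ (Fin k)) (hw : ‖w‖ = 1) (hw' : ‖w'‖ = 1)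
      (hvw : ⟪v, w⟫ = 0) (hvw' : ⟪v, w'⟫ = 0),
      ⟪w, w'⟫ = 1 / 3 → σ w hw hvw = σ w' hw' hvw' → False := by
    intro w w' hw hw' hvw hvw' h13 heq
    have h1 := hσR w hw hvw
    have h2 := hσR w' hw' hvw'
    rw [heq] at h1
    refine hR ⟨_, h1, _, h2, ?_⟩
    simp only [hPdef]
    exact dist_pair_one _ w w' c3 hw hw' h13 hc3sq
  -- the rhombus step
  have rhomb : ∀ (u u' : EuclideanSpace ℝ (Fin k)) (hu : ‖u‖ = 1) (hu' : ‖u'‖ = 1)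
      (hvu : ⟪v, u⟫ = 0) (hvu' : ⟪v, u'⟫ = 0),
      ⟪u, u'⟫ = μ → ∀ (G : Fin (k - 3) → EuclideanSpace ℝ (Fin k)), Orthonormal ℝ G →
      (∀ t, ⟪v, G t⟫ = 0) → (∀ t, ⟪u, G t⟫ = 0) → (∀ t, ⟪u', G t⟫ = 0) →
      σ u hu hvu = σ u' hu' hvu' := by
    intro u u' hu hu' hvu hvu' huu' G hG hGv hGu hGu'
    -- scalar bookkeeping
    have hK3 : ((k - 3 : ℕ) : ℝ) = K - 3 := by
      rw [Nat.cast_sub (by omega : 3 ≤ k)]; norm_num; rfl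
    have h2K4 : (2 * K - 4) ≠ 0 := ne_of_gt (by nlinarith)
    have h3K6 : (3 * K - 6) ≠ 0 := ne_of_gt (by nlinarith)
    have hK3ne : (K - 3) ≠ 0 := ne_of_gt (by nlinarith)
    set lam : ℝ := K / (2 * K - 4) with hlamdef
    set r2v : ℝ := (2 * K - 6) / (3 * K - 6) with hr2vdef
    have hr2vpos : 0 ≤ r2v := by
      rw [hr2vdef]
      apply div_nonneg <;> nlinarith
    set r : ℝ := Real.sqrt r2v with hrdef
    have hrsq : r ^ 2 = r2v := Real.sq_sqrt hr2vpos
    have hμ1 : 1 + μ = (2 * K - 4) / (3 * K) := by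
      rw [hμdef]; field_simp; ring
    have hIu : lam * (1 + μ) = 1 / 3 := by
      rw [hμ1, hlamdef]; field_simp [show K * 2 - 4 ≠ 0 by intro h; apply h2K4; linarith, show K * 3 - 6 ≠ 0 by intro h; apply h3K6; linarith]
    have hI1 : lam ^ 2 * (2 + 2 * μ) + r2v = 1 := by
      have e : (2 : ℝ) + 2 * μ = 2 * (1 + μ) := by ring
      rw [e, hμ1, hlamdef, hr2vdef]; field_simp [show K * 2 - 4 ≠ 0 by intro h; apply h2K4; linarith, show K * 3 - 6 ≠ 0 by intro h; apply h3K6; linarith]; ring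
    have hI2 : lam ^ 2 * (2 + 2 * μ) + r2v * (-1 / (K - 3)) = 1 / 3 := by
      have e : (2 : ℝ) + 2 * μ = 2 * (1 + μ) := by ring
      rw [e, hμ1, hlamdef, hr2vdef]; field_simp [show K * 2 - 4 ≠ 0 by intro h; apply h2K4; linarith, show K * 3 - 6 ≠ 0 by intro h; apply h3K6; linarith]; ring
    -- the simplex family
    obtain ⟨Y, hY1, hY2, hY3⟩ := simplex_family (k - 3) (by omega) G hG
    have hYu : ∀ j, ⟪u, Y j⟫ = 0 := hY3 u hGu
    have hYu' : ∀ j, ⟪u', Y j⟫ = 0 := hY3 u' hGu'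
    have hYv : ∀ j, ⟪v, Y j⟫ = 0 := hY3 v hGv
    have hYuL : ∀ j, ⟪Y j, u⟫ = 0 := fun j => by rw [real_inner_comm]; exact hYu j
    have hYu'L : ∀ j, ⟪Y j, u'⟫ = 0 := fun j => by rw [real_inner_comm]; exact hYu' j
    -- the k-2 midpoint certifying vectors
    set c : Fin (k - 3 + 1) → EuclideanSpace ℝ (Fin k) :=
      fun j => lam • (u + u') + r • Y j with hcdef
    have huu : ⟪u, u⟫ = 1 := by rw [real_inner_self_eq_norm_sq, hu]; norm_num
    have hu'u' : ⟪u', u'⟫ = 1 := by rw [real_inner_self_eq_norm_sq, hu']; norm_num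
    have hu'u : ⟪u', u⟫ = μ := by rw [real_inner_comm]; exact huu'
    have hcu : ∀ j, ⟪c j, u⟫ = 1 / 3 := by
      intro j
      simp only [hcdef, inner_add_left, real_inner_smul_left, huu, hu'u, hYuL]
      linear_combination hIu
    have hcu' : ∀ j, ⟪c j, u'⟫ = 1 / 3 := by
      intro j
      simp only [hcdef, inner_add_left, real_inner_smul_left, hu'u', huu', hYu'L]
      linear_combination hIu
    have hcv : ∀ j, ⟪v, c j⟫ = 0 := by
      intro j
      simp only [hcdef, inner_add_right, real_inner_smul_right, hvu, hvu', hYv]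
      ring
    have hYY : ∀ j, ⟪Y j, Y j⟫ = 1 := fun j => by
      rw [real_inner_self_eq_norm_sq, hY1 j]; norm_num
    have hcnorm : ∀ j, ‖c j‖ = 1 := by
      intro j
      apply norm_eq_one_of_sq
      rw [← real_inner_self_eq_norm_sq]
      simp only [hcdef, inner_add_left, inner_add_right, real_inner_smul_left,
        real_inner_smul_right, huu, hu'u', huu', hu'u, hYu, hYu', hYuL, hYu'L, hYY]
      linear_combination hI1 + hrsq
    have hc13 : ∀ i j, i ≠ j → ⟪c i, c j⟫ = 1 / 3 := by
      intro i j hij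
      have hYij : ⟪Y i, Y j⟫ = -1 / (K - 3) := by rw [hY2 i j hij, hK3]
      simp only [hcdef, inner_add_left, inner_add_right, real_inner_smul_left,
        real_inner_smul_right, huu, hu'u', huu', hu'u, hYu, hYu', hYuL, hYu'L, hYij]
      linear_combination hI2 + (-1 / (K - 3)) * hrsq
    -- slots of the certifying vectors
    set ι : Fin (k - 3 + 1) → ℕ := fun j => σ (c j) (hcnorm j) (hcv j) with hιdef
    have hinj : Function.Injective ι := by
      intro i j hij
      by_contra hne
      exact key (c i) (c j) (hcnorm i) (hcnorm j) (hcv i) (hcv j) (hc13 i j hne) hij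
    set T : Finset ℕ := Finset.image ι Finset.univ with hTdef
    have hTcard : T.card = k - 2 := by
      rw [hTdef, Finset.card_image_of_injective _ hinj, Finset.card_univ, Fintype.card_fin]
      omega
    have hTU : T ⊆ U := by
      intro t ht
      rw [hTdef] at ht
      simp only [Finset.mem_image] at ht
      obtain ⟨j, _, rfl⟩ := ht
      exact hσU _ _ _
    have hauT : σ u hu hvu ∉ T := by
      intro hmem
      rw [hTdef] at hmem
      simp only [Finset.mem_image] at hmem
      obtain ⟨j, _, hj⟩ := hmem
      exact key (c j) u (hcnorm j) hu (hcv j) hvu (hcu j) hj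
    have hauT' : σ u' hu' hvu' ∉ T := by
      intro hmem
      rw [hTdef] at hmem
      simp only [Finset.mem_image] at hmem
      obtain ⟨j, _, hj⟩ := hmem
      exact key (c j) u' (hcnorm j) hu' (hcv j) hvu' (hcu' j) hj
    exact pigeon_aux hTU (by rw [hTcard, hUcard]; omega) (hσU u hu hvu) (hσU u' hu' hvu')
      hauT hauT'
  -- the final configuration
  have h3k : 2 < k - 1 := by omega
  set f0 : EuclideanSpace ℝ (Fin k) := f ⟨0, by omega⟩ with hf0def
  set f1 : EuclideanSpace ℝ (Fin k) := f ⟨1, by omega⟩ with hf1def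
  set f2 : EuclideanSpace ℝ (Fin k) := f ⟨2, by omega⟩ with hf2def
  have h00 : ⟪f0, f0⟫ = 1 := by rw [real_inner_self_eq_norm_sq, hf0def, hfnorm]; norm_num
  have h11 : ⟪f1, f1⟫ = 1 := by rw [real_inner_self_eq_norm_sq, hf1def, hfnorm]; norm_num
  have h22 : ⟪f2, f2⟫ = 1 := by rw [real_inner_self_eq_norm_sq, hf2def, hfnorm]; norm_num
  have h01 : ⟪f0, f1⟫ = 0 := by
    rw [hf0def, hf1def]; exact hff _ _ (by simp [Fin.ext_iff])
  have h02 : ⟪f0, f2⟫ = 0 := by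
    rw [hf0def, hf2def]; exact hff _ _ (by simp [Fin.ext_iff])
  have h12 : ⟪f1, f2⟫ = 0 := by
    rw [hf1def, hf2def]; exact hff _ _ (by simp [Fin.ext_iff])
  have hIC := inner_combo3 h00 h11 h22 h01 h02 h12
  have hvf0 : ⟪v, f0⟫ = 0 := by rw [hf0def]; exact hfv _
  have hvf1 : ⟪v, f1⟫ = 0 := by rw [hf1def]; exact hfv _
  have hvf2 : ⟪v, f2⟫ = 0 := by rw [hf2def]; exact hfv _
  -- scalars for the configuration
  set a : ℝ := Real.sqrt (2 / 3) with hadef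
  set b : ℝ := Real.sqrt (1 / 3) with hbdef
  have ha2 : a ^ 2 = 2 / 3 := Real.sq_sqrt (by norm_num)
  have hb2 : b ^ 2 = 1 / 3 := Real.sq_sqrt (by norm_num)
  have ha0 : a ≠ 0 := ne_of_gt (Real.sqrt_pos.mpr (by norm_num))
  set cc : ℝ := μ / a with hccdef
  have hcc2 : cc ^ 2 = 3 / 2 * μ ^ 2 := by
    rw [hccdef, div_pow, ha2]; ring
  set ee : ℝ := Real.sqrt (1 - 3 / 2 * μ ^ 2) with heedef
  have hee2 : ee ^ 2 = 1 - 3 / 2 * μ ^ 2 := Real.sq_sqrt (by nlinarith [hμsq])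
  set N : ℝ := 1 - μ ^ 2 with hNdef
  have hN0 : 0 < N := by rw [hNdef]; nlinarith [hμsq]
  set sN : ℝ := Real.sqrt N with hsNdef
  have hsN2 : sN ^ 2 = N := Real.sq_sqrt hN0.le
  have hsN0 : sN ≠ 0 := ne_of_gt (Real.sqrt_pos.mpr hN0)
  -- the configuration vectors
  set ww : EuclideanSpace ℝ (Fin k) := a • f0 + b • f1 + (0 : ℝ) • f2 with hwwdef
  set ww' : EuclideanSpace ℝ (Fin k) := a • f0 + (-b) • f1 + (0 : ℝ) • f2 with hww'def
  set zz : EuclideanSpace ℝ (Fin k) := cc • f0 + (0 : ℝ) • f1 + ee • f2 with hzzdef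
  set gs1 : EuclideanSpace ℝ (Fin k) :=
    (sN⁻¹ * (b * ee)) • f0 + (sN⁻¹ * (-(a * ee))) • f1 + (sN⁻¹ * (-(b * cc))) • f2 with hgs1def
  set gs2 : EuclideanSpace ℝ (Fin k) :=
    (sN⁻¹ * (-(b * ee))) • f0 + (sN⁻¹ * (-(a * ee))) • f1 + (sN⁻¹ * (b * cc)) • f2 with hgs2def
  -- norms and inner products
  have hwwnorm : ‖ww‖ = 1 := by
    apply norm_eq_one_of_sq
    rw [← real_inner_self_eq_norm_sq, hwwdef, hIC]
    linear_combination ha2 + hb2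
  have hww'norm : ‖ww'‖ = 1 := by
    apply norm_eq_one_of_sq
    rw [← real_inner_self_eq_norm_sq, hww'def, hIC]
    linear_combination ha2 + hb2
  have hzznorm : ‖zz‖ = 1 := by
    apply norm_eq_one_of_sq
    rw [← real_inner_self_eq_norm_sq, hzzdef, hIC]
    linear_combination hcc2 + hee2
  have h13 : ⟪ww, ww'⟫ = 1 / 3 := by
    rw [hwwdef, hww'def, hIC]
    linear_combination ha2 - hb2
  have hacc : a * cc = μ := by rw [hccdef]; field_simp
  have hwwzz : ⟪ww, zz⟫ = μ := by
    rw [hwwdef, hzzdef, hIC]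
    linear_combination hacc
  have hzzww' : ⟪zz, ww'⟫ = μ := by
    rw [hzzdef, hww'def, hIC]
    linear_combination hacc
  have hvww : ⟪v, ww⟫ = 0 := by
    rw [hwwdef]
    simp only [inner_add_right, real_inner_smul_right, hvf0, hvf1, hvf2]
    ring
  have hvww' : ⟪v, ww'⟫ = 0 := by
    rw [hww'def]
    simp only [inner_add_right, real_inner_smul_right, hvf0, hvf1, hvf2]
    ring
  have hvzz : ⟪v, zz⟫ = 0 := by
    rw [hzzdef]
    simp only [inner_add_right, real_inner_smul_right, hvf0, hvf1, hvf2]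
    ring
  have hgs1norm : ‖gs1‖ = 1 := by
    apply norm_eq_one_of_sq
    rw [← real_inner_self_eq_norm_sq, hgs1def, hIC]
    have hX : (b * ee) ^ 2 + (a * ee) ^ 2 + (b * cc) ^ 2 = N := by
      rw [hNdef]
      linear_combination (ee ^ 2) * ha2 + (ee ^ 2 + cc ^ 2) * hb2 + (1 / 3) * hcc2 + hee2
    have hsN : sN⁻¹ * sN⁻¹ * N = 1 := by
      rw [← hsN2]; field_simp
    linear_combination (sN⁻¹ * sN⁻¹) * hX + hsN
  have hgs2norm : ‖gs2‖ = 1 := by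
    apply norm_eq_one_of_sq
    rw [← real_inner_self_eq_norm_sq, hgs2def, hIC]
    have hX : (b * ee) ^ 2 + (a * ee) ^ 2 + (b * cc) ^ 2 = N := by
      rw [hNdef]
      linear_combination (ee ^ 2) * ha2 + (ee ^ 2 + cc ^ 2) * hb2 + (1 / 3) * hcc2 + hee2
    have hsN : sN⁻¹ * sN⁻¹ * N = 1 := by
      rw [← hsN2]; field_simp
    linear_combination (sN⁻¹ * sN⁻¹) * hX + hsN
  have hwwgs1 : ⟪ww, gs1⟫ = 0 := by rw [hwwdef, hgs1def, hIC]; ring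
  have hzzgs1 : ⟪zz, gs1⟫ = 0 := by rw [hzzdef, hgs1def, hIC]; ring
  have hww'gs2 : ⟪ww', gs2⟫ = 0 := by rw [hww'def, hgs2def, hIC]; ring
  have hzzgs2 : ⟪zz, gs2⟫ = 0 := by rw [hzzdef, hgs2def, hIC]; ring
  have hvgs1 : ⟪v, gs1⟫ = 0 := by
    rw [hgs1def]
    simp only [inner_add_right, real_inner_smul_right, hvf0, hvf1, hvf2]
    ring
  have hvgs2 : ⟪v, gs2⟫ = 0 := by
    rw [hgs2def]
    simp only [inner_add_right, real_inner_smul_right, hvf0, hvf1, hvf2]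
    ring
  -- inner products of the low f's with the tail f's
  have htail : ∀ (m : Fin (k - 1)), 2 < (m : ℕ) →
      ⟪ww, f m⟫ = 0 ∧ ⟪ww', f m⟫ = 0 ∧ ⟪zz, f m⟫ = 0 ∧ ⟪gs1, f m⟫ = 0 ∧ ⟪gs2, f m⟫ = 0 := by
    intro m hm
    have e0 : ⟪f0, f m⟫ = 0 := by
      rw [hf0def]; exact hff _ _ (by simp [Fin.ext_iff]; omega)
    have e1 : ⟪f1, f m⟫ = 0 := by
      rw [hf1def]; exact hff _ _ (by simp [Fin.ext_iff]; omega)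
    have e2 : ⟪f2, f m⟫ = 0 := by
      rw [hf2def]; exact hff _ _ (by simp [Fin.ext_iff]; omega)
    refine ⟨?_, ?_, ?_, ?_, ?_⟩ <;>
      · first
        | (rw [hwwdef]; simp only [inner_add_left, real_inner_smul_left, e0, e1, e2]; ring)
        | (rw [hww'def]; simp only [inner_add_left, real_inner_smul_left, e0, e1, e2]; ring)
        | (rw [hzzdef]; simp only [inner_add_left, real_inner_smul_left, e0, e1, e2]; ring)
        | (rw [hgs1def]; simp only [inner_add_left, real_inner_smul_left, e0, e1, e2]; ring)
        | (rw [hgs2def]; simp only [inner_add_left, real_inner_smul_left, e0, e1, e2]; ring)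
  -- the two auxiliary orthonormal families
  have hkm3 : ∀ t : Fin (k - 3), (t : ℕ) + 2 < k - 1 := by
    intro t; have := t.isLt; omega
  set G1 : Fin (k - 3) → EuclideanSpace ℝ (Fin k) :=
    fun t => if (t : ℕ) = 0 then gs1 else f ⟨(t : ℕ) + 2, hkm3 t⟩ with hG1def
  set G2 : Fin (k - 3) → EuclideanSpace ℝ (Fin k) :=
    fun t => if (t : ℕ) = 0 then gs2 else f ⟨(t : ℕ) + 2, hkm3 t⟩ with hG2def
  have hG1 : Orthonormal ℝ G1 := by
    constructor
    · intro t
      simp only [hG1def]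
      by_cases h0 : (t : ℕ) = 0
      · rw [if_pos h0]; exact hgs1norm
      · rw [if_neg h0]; exact hfnorm _
    · intro i j hij
      simp only [hG1def]
      by_cases hi : (i : ℕ) = 0 <;> by_cases hj : (j : ℕ) = 0
      · exact absurd (Fin.ext (hi.trans hj.symm)) hij
      · rw [if_pos hi, if_neg hj]
        exact (htail _ (by show 2 < (j : ℕ) + 2; omega)).2.2.2.1
      · rw [if_neg hi, if_pos hj]
        rw [real_inner_comm]
        exact (htail _ (by show 2 < (i : ℕ) + 2; omega)).2.2.2.1
      · rw [if_neg hi, if_neg hj]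
        have hvij : (i : ℕ) ≠ (j : ℕ) := fun h => hij (Fin.ext h)
        exact hff _ _ (by simp only [ne_eq, Fin.mk.injEq]; omega)
  have hG2 : Orthonormal ℝ G2 := by
    constructor
    · intro t
      simp only [hG2def]
      by_cases h0 : (t : ℕ) = 0
      · rw [if_pos h0]; exact hgs2norm
      · rw [if_neg h0]; exact hfnorm _
    · intro i j hij
      simp only [hG2def]
      by_cases hi : (i : ℕ) = 0 <;> by_cases hj : (j : ℕ) = 0
      · exact absurd (Fin.ext (hi.trans hj.symm)) hij
      · rw [if_pos hi, if_neg hj]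
        exact (htail _ (by show 2 < (j : ℕ) + 2; omega)).2.2.2.2
      · rw [if_neg hi, if_pos hj]
        rw [real_inner_comm]
        exact (htail _ (by show 2 < (i : ℕ) + 2; omega)).2.2.2.2
      · rw [if_neg hi, if_neg hj]
        have hvij : (i : ℕ) ≠ (j : ℕ) := fun h => hij (Fin.ext h)
        exact hff _ _ (by simp only [ne_eq, Fin.mk.injEq]; omega)
  have hG1v : ∀ t, ⟪v, G1 t⟫ = 0 := by
    intro t
    simp only [hG1def]
    by_cases h0 : (t : ℕ) = 0
    · rw [if_pos h0]; exact hvgs1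
    · rw [if_neg h0]; exact hfv _
  have hG2v : ∀ t, ⟪v, G2 t⟫ = 0 := by
    intro t
    simp only [hG2def]
    by_cases h0 : (t : ℕ) = 0
    · rw [if_pos h0]; exact hvgs2
    · rw [if_neg h0]; exact hfv _
  have hG1w : ∀ t, ⟪ww, G1 t⟫ = 0 := by
    intro t
    simp only [hG1def]
    by_cases h0 : (t : ℕ) = 0
    · rw [if_pos h0]; exact hwwgs1
    · rw [if_neg h0]; exact ((htail _ (by show 2 < (t : ℕ) + 2; omega)).1)
  have hG1z : ∀ t, ⟪zz, G1 t⟫ = 0 := by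
    intro t
    simp only [hG1def]
    by_cases h0 : (t : ℕ) = 0
    · rw [if_pos h0]; exact hzzgs1
    · rw [if_neg h0]; exact ((htail _ (by show 2 < (t : ℕ) + 2; omega)).2.2.1)
  have hG2w' : ∀ t, ⟪ww', G2 t⟫ = 0 := by
    intro t
    simp only [hG2def]
    by_cases h0 : (t : ℕ) = 0
    · rw [if_pos h0]; exact hww'gs2
    · rw [if_neg h0]; exact ((htail _ (by show 2 < (t : ℕ) + 2; omega)).2.1)
  have hG2z : ∀ t, ⟪zz, G2 t⟫ = 0 := by
    intro t
    simp only [hG2def]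
    by_cases h0 : (t : ℕ) = 0
    · rw [if_pos h0]; exact hzzgs2
    · rw [if_neg h0]; exact ((htail _ (by show 2 < (t : ℕ) + 2; omega)).2.2.1)
  -- the two rhombus steps and the final contradiction
  have e1 := rhomb ww zz hwwnorm hzznorm hvww hvzz hwwzz G1 hG1 hG1v hG1w hG1z
  have e2 := rhomb zz ww' hzznorm hww'norm hvzz hvww' hzzww' G2 hG2 hG2v hG2z hG2w'
  exact key ww ww' hwwnorm hww'norm hvww hvww' h13 (e1.trans e2)
end

section
/- Let n ≥ 3 be an integer, let O ∈ ℝ^n, let r > 0, and let S be the sphere of radius r centred at O. Let θ be an angle with 0 < θ < π. Suppose R is a nonempty subset of S with the following closure property: for every A ∈ R, every point C ∈ S such that the angle between the vectors C − O and O − A equals θ also belongs to R. Then R = S, i.e. every point of the sphere belongs to R. -/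
open Metric
open scoped RealInnerProductSpace

lemma exists_unit_orthogonal {n : ℕ} (hn : 3 ≤ n) (a d : EuclideanSpace ℝ (Fin n)) :
    ∃ w : EuclideanSpace ℝ (Fin n), ‖w‖ = 1 ∧ ⟪a, w⟫ = 0 ∧ ⟪d, w⟫ = 0 := by
  classical
  have hsp : Module.finrank ℝ (Submodule.span ℝ ({a, d} : Set (EuclideanSpace ℝ (Fin n)))) ≤ 2 := by
    have h1 := finrank_span_finset_le_card (R := ℝ) ({a, d} : Finset (EuclideanSpace ℝ (Fin n)))
    rw [Set.finrank] at h1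
    have h2 : (({a, d} : Finset (EuclideanSpace ℝ (Fin n))) : Set (EuclideanSpace ℝ (Fin n)))
        = ({a, d} : Set (EuclideanSpace ℝ (Fin n))) := by simp
    rw [h2] at h1
    have h3 : ({a, d} : Finset (EuclideanSpace ℝ (Fin n))).card ≤ 2 :=
      (Finset.card_insert_le _ _).trans (by simp)
    omega
  have htot := (Submodule.span ℝ ({a, d} : Set (EuclideanSpace ℝ (Fin n)))).finrank_add_finrank_orthogonal
  rw [finrank_euclideanSpace_fin] at htot
  have hKpos : 0 < Module.finrank ℝ (Submodule.span ℝ ({a, d} : Set (EuclideanSpace ℝ (Fin n))))ᗮ := by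
    omega
  obtain ⟨v, hvK, hv0⟩ := (Submodule.ne_bot_iff
      (Submodule.span ℝ ({a, d} : Set (EuclideanSpace ℝ (Fin n))))ᗮ).mp (by
    intro h
    rw [h] at hKpos
    simp [finrank_bot] at hKpos)
  have hva : ⟪a, v⟫ = 0 :=
    (Submodule.mem_orthogonal _ _).mp hvK a (Submodule.subset_span (by simp))
  have hvd : ⟪d, v⟫ = 0 :=
    (Submodule.mem_orthogonal _ _).mp hvK d (Submodule.subset_span (by simp))
  have hvn : ‖v‖ ≠ 0 := norm_ne_zero_iff.mpr hv0
  refine ⟨‖v‖⁻¹ • v, ?_, ?_, ?_⟩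
  · rw [norm_smul]; simp [hvn]
  · rw [real_inner_smul_right, hva, mul_zero]
  · rw [real_inner_smul_right, hvd, mul_zero]

lemma exists_middle {n : ℕ} (hn : 3 ≤ n) {r c : ℝ} (hr : 0 < r) (hc : c ^ 2 < 1)
    (a d : EuclideanSpace ℝ (Fin n)) (ha : ‖a‖ = r) (hd : ‖d‖ = r)
    (hs : (2 * c ^ 2 - 1) * r ^ 2 ≤ ⟪a, d⟫) :
    ∃ u : EuclideanSpace ℝ (Fin n), ‖u‖ = r ∧ ⟪u, a⟫ = -(c * r ^ 2) ∧ ⟪u, d⟫ = -(c * r ^ 2) := by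
  obtain ⟨w, hw1, hwa, hwd⟩ := exists_unit_orthogonal hn a d
  by_cases he : a + d = 0
  · have hda : d = -a := eq_neg_of_add_eq_zero_right he
    have had : ⟪a, d⟫ = -r ^ 2 := by
      rw [hda, inner_neg_right, real_inner_self_eq_norm_sq, ha]
    have h0 : c ^ 2 * r ^ 2 ≤ 0 := by nlinarith
    have hc2 : c ^ 2 ≤ 0 := by
      have hrp : 0 < r ^ 2 := pow_pos hr 2
      nlinarith
    have hc0 : c = 0 := by
      have : c ^ 2 = 0 := le_antisymm hc2 (sq_nonneg c)
      exact pow_eq_zero_iff (by norm_num) |>.mp this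
    refine ⟨r • w, ?_, ?_, ?_⟩
    · rw [norm_smul, hw1, mul_one, Real.norm_eq_abs, abs_of_pos hr]
    · rw [real_inner_smul_left, real_inner_comm a w, hwa, hc0]; ring
    · rw [real_inner_smul_left, real_inner_comm d w, hwd, hc0]; ring
  · have hepos : 0 < ‖a + d‖ ^ 2 := pow_pos (norm_pos_iff.mpr he) 2
    have he2 : ‖a + d‖ ^ 2 = 2 * r ^ 2 + 2 * ⟪a, d⟫ := by
      rw [norm_add_sq_real, ha, hd]; ring
    have hbig : 4 * c ^ 2 * r ^ 2 ≤ ‖a + d‖ ^ 2 := by nlinarith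
    set α := -(2 * c * r ^ 2) / ‖a + d‖ ^ 2 with hα
    set γ := Real.sqrt (r ^ 2 - 4 * c ^ 2 * r ^ 4 / ‖a + d‖ ^ 2) with hγ
    have hγnn : 0 ≤ r ^ 2 - 4 * c ^ 2 * r ^ 4 / ‖a + d‖ ^ 2 := by
      rw [sub_nonneg, div_le_iff₀ hepos]; nlinarith
    have hγ2 : γ ^ 2 = r ^ 2 - 4 * c ^ 2 * r ^ 4 / ‖a + d‖ ^ 2 := Real.sq_sqrt hγnn
    have hew : ⟪a + d, w⟫ = (0 : ℝ) := by rw [inner_add_left, hwa, hwd]; ring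
    have hwe : ⟪w, a + d⟫ = (0 : ℝ) := by rw [real_inner_comm]; exact hew
    have hww : ⟪w, w⟫ = (1 : ℝ) := by rw [real_inner_self_eq_norm_sq, hw1]; norm_num
    have hee : ⟪a + d, a + d⟫ = ‖a + d‖ ^ 2 := real_inner_self_eq_norm_sq _
    refine ⟨α • (a + d) + γ • w, ?_, ?_, ?_⟩
    · have key : α * (α * ‖a + d‖ ^ 2) = 4 * c ^ 2 * r ^ 4 / ‖a + d‖ ^ 2 := by
        rw [hα]; field_simp; ring
      have h1 : ‖α • (a + d) + γ • w‖ ^ 2 = r ^ 2 := by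
        rw [← real_inner_self_eq_norm_sq, inner_add_add_self]
        simp only [real_inner_smul_left, real_inner_smul_right]
        rw [hew, hwe, hww, hee]
        linear_combination key + hγ2
      rw [← Real.sqrt_sq (norm_nonneg _), h1, Real.sqrt_sq hr.le]
    · rw [inner_add_left, real_inner_smul_left, real_inner_smul_left, real_inner_comm a w, hwa,
        inner_add_left, real_inner_self_eq_norm_sq, ha, real_inner_comm a d, hα, he2]
      have hEpos : (0:ℝ) < 2 * r ^ 2 + 2 * ⟪a, d⟫ := he2 ▸ hepos
      rw [mul_zero, add_zero, div_mul_eq_mul_div, div_eq_iff (ne_of_gt hEpos)]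
      ring
    · rw [inner_add_left, real_inner_smul_left, real_inner_smul_left, real_inner_comm d w, hwd,
        inner_add_left, real_inner_self_eq_norm_sq, hd, hα, he2]
      have hEpos : (0:ℝ) < 2 * r ^ 2 + 2 * ⟪a, d⟫ := he2 ▸ hepos
      rw [mul_zero, add_zero, div_mul_eq_mul_div, div_eq_iff (ne_of_gt hEpos)]
      ring


/-- The spreading argument at the end of Lemma 2.2: if a nonempty subset `R` of a sphere of
radius `r` in `ℝ^n` (`n ≥ 3`) is closed under moving to any point at fixed angle
`θ ∈ (0, π)` from the antipode direction, then `R` is the whole sphere. -/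
theorem spread_over_sphere (n : ℕ) (hn : 3 ≤ n)
    (O : EuclideanSpace ℝ (Fin n)) (r : ℝ) (hr : 0 < r)
    (θ : ℝ) (hθ : 0 < θ) (hθ' : θ < Real.pi)
    (R : Set (EuclideanSpace ℝ (Fin n)))
    (hsub : R ⊆ Metric.sphere O r) (hne : R.Nonempty)
    (hclosed : ∀ A ∈ R, ∀ C ∈ Metric.sphere O r,
      InnerProductGeometry.angle (C - O) (O - A) = θ → C ∈ R) :
    R = Metric.sphere O r := by
  set c := Real.cos θ with hcdef
  have hc2 : c ^ 2 < 1 := by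
    have h1 : c < 1 := by
      have := Real.cos_lt_cos_of_nonneg_of_le_pi (le_refl 0) hθ'.le hθ
      simpa using this
    have h2 : -1 < c := by
      have := Real.cos_lt_cos_of_nonneg_of_le_pi hθ.le (le_refl Real.pi) hθ'
      simpa using this
    nlinarith
  -- single step via inner products
  have step : ∀ A ∈ R, ∀ C ∈ Metric.sphere O r, ⟪C - O, A - O⟫ = -(c * r ^ 2) → C ∈ R := by
    intro A hA C hC hinner
    refine hclosed A hA C hC ?_
    have h1 : ‖C - O‖ = r := by rwa [mem_sphere_iff_norm] at hC
    have h2 : ‖O - A‖ = r := by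
      rw [norm_sub_rev]
      exact mem_sphere_iff_norm.mp (hsub hA)
    have h3 : ⟪C - O, O - A⟫ = c * r ^ 2 := by
      rw [show O - A = -(A - O) by abel, inner_neg_right, hinner]
      ring
    rw [InnerProductGeometry.angle, h1, h2, h3]
    have h4 : c * r ^ 2 / (r * r) = c := by
      rw [show r * r = r ^ 2 by ring, mul_div_assoc, div_self (by positivity), mul_one]
    rw [h4]
    exact Real.arccos_cos hθ.le hθ'.le
  -- two-step cap lemma
  have cap : ∀ A ∈ R, ∀ D ∈ Metric.sphere O r,
      (2 * c ^ 2 - 1) * r ^ 2 ≤ ⟪A - O, D - O⟫ → D ∈ R := by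
    intro A hA D hD hs
    have ha : ‖A - O‖ = r := mem_sphere_iff_norm.mp (hsub hA)
    have hd : ‖D - O‖ = r := mem_sphere_iff_norm.mp hD
    obtain ⟨u, hu, hua, hud⟩ := exists_middle hn hr hc2 (A - O) (D - O) ha hd hs
    have hCmem : O + u ∈ Metric.sphere O r := by
      rw [mem_sphere_iff_norm]
      simpa using hu
    have hCR : O + u ∈ R := by
      refine step A hA _ hCmem ?_
      simpa using hua
    refine step _ hCR D hD ?_
    rw [show O + u - O = u by abel, real_inner_comm]
    exact hud
  -- topological argument
  apply Set.Subset.antisymm hsub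
  by_contra hRne
  have hcompl : (Metric.sphere O r \ R).Nonempty := by
    rw [Set.diff_nonempty]
    intro h
    exact hRne h
  have hconn : IsPreconnected (Metric.sphere O r : Set (EuclideanSpace ℝ (Fin n))) := by
    refine (isConnected_sphere ?_ O hr.le).isPreconnected
    rw [← Module.finrank_eq_rank, finrank_euclideanSpace_fin]
    exact_mod_cast (by omega : 1 < n)
  set t := (2 * c ^ 2 - 1) * r ^ 2 with ht
  have htlt : t < r ^ 2 := by
    rw [ht]
    nlinarith [pow_pos hr 2, mul_pos (show (0:ℝ) < 1 - c ^ 2 by nlinarith) (pow_pos hr 2)]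
  set U : Set (EuclideanSpace ℝ (Fin n)) := ⋃ A ∈ R, {x | t < ⟪A - O, x - O⟫} with hU
  set V : Set (EuclideanSpace ℝ (Fin n)) :=
    ⋃ D ∈ (Metric.sphere O r \ R), {x | t < ⟪D - O, x - O⟫} with hV
  have hopen : ∀ A : EuclideanSpace ℝ (Fin n), IsOpen {x | t < ⟪A - O, x - O⟫} := by
    intro A
    exact isOpen_lt continuous_const (Continuous.inner continuous_const
      (continuous_id.sub continuous_const))
  have hUopen : IsOpen U := isOpen_biUnion fun A _ => hopen A
  have hVopen : IsOpen V := isOpen_biUnion fun D _ => hopen D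
  have hself : ∀ x ∈ Metric.sphere O r, t < ⟪x - O, x - O⟫ := by
    intro x hx
    rw [real_inner_self_eq_norm_sq, mem_sphere_iff_norm.mp hx]
    exact htlt
  have hcover : Metric.sphere O r ⊆ U ∪ V := by
    intro x hx
    by_cases hxR : x ∈ R
    · exact Or.inl (Set.mem_biUnion hxR (hself x hx))
    · exact Or.inr (Set.mem_biUnion ⟨hx, hxR⟩ (hself x hx))
  obtain ⟨A₀, hA₀⟩ := hne
  obtain ⟨D₀, hD₀⟩ := hcompl
  have hSU : (Metric.sphere O r ∩ U).Nonempty :=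
    ⟨A₀, hsub hA₀, Set.mem_biUnion hA₀ (hself A₀ (hsub hA₀))⟩
  have hSV : (Metric.sphere O r ∩ V).Nonempty :=
    ⟨D₀, hD₀.1, Set.mem_biUnion hD₀ (hself D₀ hD₀.1)⟩
  obtain ⟨x, hxS, hxU, hxV⟩ := hconn U V hUopen hVopen hcover hSU hSV
  rw [hU] at hxU
  simp only [Set.mem_iUnion, Set.mem_setOf_eq] at hxU
  obtain ⟨A, hAR, hxA⟩ := hxU
  rw [hV] at hxV
  simp only [Set.mem_iUnion, Set.mem_setOf_eq] at hxV
  obtain ⟨D, hDR, hxD⟩ := hxV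
  have hxR : x ∈ R := cap A hAR x hxS hxA.le
  have hDinR : D ∈ R := by
    refine cap x hxR D hDR.1 ?_
    rw [real_inner_comm]
    exact hxD.le
  exact hDR.2 hDinR
end

section
/- Let n ≥ 3 be an integer, let O ∈ ℝ^n, and let S be the sphere of radius √3/2 centred at O. Let A, A_1, …, A_{n−1} be n points on S that are pairwise at distance exactly 1 from each other. Let A' be the reflection of A across the affine subspace spanned by the points O, A_1, …, A_{n−1}. Then A' lies on S, A' is at distance exactly 1 from each of A_1, …, A_{n−1}, and A' is not equal to the antipodal point 2O − A of A. -/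
open RealInnerProductSpace


/-- The geometric construction inside the Claim of Lemma 2.2: reflecting a vertex `A` of a
unit simplex inscribed in the sphere `S` of radius `√3/2` across the affine span of `O` and
the remaining vertices yields a point of `S` at distance 1 from the remaining vertices, and
this point is not the antipode of `A`. -/
theorem reflection_of_simplex_vertex (n : ℕ) (hn : 3 ≤ n)
    (O A : EuclideanSpace ℝ (Fin n)) (B : Fin (n - 1) → EuclideanSpace ℝ (Fin n))
    (hA : A ∈ Metric.sphere O (Real.sqrt 3 / 2))
    (hB : ∀ i, B i ∈ Metric.sphere O (Real.sqrt 3 / 2))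
    (hAB : ∀ i, dist A (B i) = 1)
    (hBB : ∀ i j, i ≠ j → dist (B i) (B j) = 1)
    (A' : EuclideanSpace ℝ (Fin n))
    (hA' : A' = EuclideanGeometry.reflection
      (affineSpan ℝ (insert O (Set.range B))) A) :
    A' ∈ Metric.sphere O (Real.sqrt 3 / 2) ∧
      (∀ i, dist A' (B i) = 1) ∧
      A' ≠ (2 : ℝ) • O - A := by
  set s := affineSpan ℝ (insert O (Set.range B)) with hs
  have hO : O ∈ s := subset_affineSpan ℝ _ (Set.mem_insert _ _)
  have hBi : ∀ i, B i ∈ s := fun i =>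
    subset_affineSpan ℝ _ (Set.mem_insert_of_mem _ ⟨i, rfl⟩)
  haveI : Nonempty s := ⟨⟨O, hO⟩⟩
  have i0 : Fin (n - 1) := ⟨0, by omega⟩
  refine ⟨?_, ?_, ?_⟩
  · simp only [Metric.mem_sphere] at hA ⊢
    rw [hA', dist_comm, EuclideanGeometry.dist_reflection_eq_of_mem s hO A, dist_comm, hA]
  · intro i
    rw [hA', dist_comm, EuclideanGeometry.dist_reflection_eq_of_mem s (hBi i) A, dist_comm,
      hAB i]
  · intro h
    rw [hA', EuclideanGeometry.reflection_apply'] at h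
    have hproj : (EuclideanGeometry.orthogonalProjection s A : EuclideanSpace ℝ (Fin n)) = O := by
      have h2 : (EuclideanGeometry.orthogonalProjection s A : EuclideanSpace ℝ (Fin n)) - A
          + (EuclideanGeometry.orthogonalProjection s A : EuclideanSpace ℝ (Fin n))
          = (2:ℝ) • O - A := h
      set P : EuclideanSpace ℝ (Fin n) :=
        (EuclideanGeometry.orthogonalProjection s A : EuclideanSpace ℝ (Fin n))
      have h3 : (2:ℝ) • P = (2:ℝ) • O := by
        rw [two_smul, two_smul]
        calc P + P = (P - A + P) + A := by abel
          _ = ((2:ℝ) • O - A) + A := by rw [h2]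
          _ = (2:ℝ) • O := by abel
          _ = O + O := two_smul ℝ O
      exact smul_right_injective _ (by norm_num : (2:ℝ) ≠ 0) h3
    have horth : A - O ∈ s.directionᗮ := by
      have := EuclideanGeometry.vsub_orthogonalProjection_mem_direction_orthogonal s A
      rwa [hproj] at this
    have hdir : B i0 - O ∈ s.direction := AffineSubspace.vsub_mem_direction (hBi i0) hO
    have hzero : (inner ℝ (A - O) (B i0 - O) : ℝ) = 0 := by
      have := horth (B i0 - O) hdir
      rwa [real_inner_comm] at this
    have hnA : ‖A - O‖ = Real.sqrt 3 / 2 := by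
      simpa [Metric.mem_sphere, dist_eq_norm] using hA
    have hnB : ‖B i0 - O‖ = Real.sqrt 3 / 2 := by
      simpa [Metric.mem_sphere, dist_eq_norm] using hB i0
    have hnAB : ‖(A - O) - (B i0 - O)‖ = 1 := by
      have := hAB i0
      rw [dist_eq_norm] at this
      convert this using 2
      · rfl
      · abel
    have hsq : ‖(A - O) - (B i0 - O)‖^2
        = ‖A - O‖^2 - 2 * (inner ℝ (A - O) (B i0 - O) : ℝ) + ‖B i0 - O‖^2 := by
      rw [@norm_sub_sq_real]
    rw [hnAB, hnA, hnB, hzero] at hsq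
    have h3 : Real.sqrt 3 ^ 2 = 3 := Real.sq_sqrt (by norm_num)
    nlinarith [h3]
end

section
/- Let k ≥ 4 be an integer, let A ∈ ℝ^k, and let S be the sphere of radius k+2 centred at A. For every point B on S, there exist two points P₁ and P₂ on S such that dist(B, P₁) = dist(B, P₂) = 1 and dist(P₁, P₂) = (k+2)/(k+3). -/
open Submodule Module

local notation "⟪" x ", " y "⟫" => @inner ℝ _ _ x y

lemma exists_orthonormal_pair {k : ℕ} (hk : 3 ≤ k) (u : EuclideanSpace ℝ (Fin k)) :
    ∃ v w : EuclideanSpace ℝ (Fin k), ‖v‖ = 1 ∧ ‖w‖ = 1 ∧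
      ⟪u, v⟫ = 0 ∧ ⟪u, w⟫ = 0 ∧ ⟪v, w⟫ = 0 := by
  have hdim : 2 ≤ finrank ℝ ((span ℝ {u})ᗮ : Submodule ℝ (EuclideanSpace ℝ (Fin k))) := by
    have h1 : finrank ℝ (span ℝ ({u} : Set (EuclideanSpace ℝ (Fin k)))) ≤ 1 := by
      simpa using finrank_span_le_card ({u} : Set (EuclideanSpace ℝ (Fin k)))
    have h2 := Submodule.finrank_add_finrank_orthogonal
      (span ℝ ({u} : Set (EuclideanSpace ℝ (Fin k))))
    have h3 : finrank ℝ (EuclideanSpace ℝ (Fin k)) = k := finrank_euclideanSpace_fin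
    omega
  set K : Submodule ℝ (EuclideanSpace ℝ (Fin k)) := (span ℝ {u})ᗮ with hK
  set b := stdOrthonormalBasis ℝ K
  have hb := b.orthonormal
  set v : K := b ⟨0, by omega⟩
  set w : K := b ⟨1, by omega⟩
  refine ⟨v, w, ?_, ?_, ?_, ?_, ?_⟩
  · exact hb.1 _
  · exact hb.1 _
  · rw [real_inner_comm]
    exact Submodule.mem_orthogonal_singleton_iff_inner_left.mp v.2
  · rw [real_inner_comm]
    exact Submodule.mem_orthogonal_singleton_iff_inner_left.mp w.2
  · have := hb.2 (i := ⟨0, by omega⟩) (j := ⟨1, by omega⟩) (by simp)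
    exact this

lemma norm_comb_sq {E : Type*} [NormedAddCommGroup E] [InnerProductSpace ℝ E] {v w : E}
    (hv : ‖v‖ = 1) (hw : ‖w‖ = 1) (hvw : ⟪v, w⟫ = 0) (a b : ℝ) :
    ‖a • v + b • w‖ ^ 2 = a ^ 2 + b ^ 2 := by
  have h1 : ⟪v, v⟫ = 1 := by rw [real_inner_self_eq_norm_sq, hv]; norm_num
  have h2 : ⟪w, w⟫ = 1 := by rw [real_inner_self_eq_norm_sq, hw]; norm_num
  have hwv : ⟪w, v⟫ = 0 := by rw [real_inner_comm]; exact hvw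
  rw [← real_inner_self_eq_norm_sq]
  simp only [inner_add_left, inner_add_right, real_inner_smul_left, real_inner_smul_right,
    h1, h2, hvw, hwv]
  ring

set_option maxHeartbeats 1000000 in
/-- The geometric step in the final part of the main proof: on the sphere of radius `k+2`
around `A`, for every point `B` of the sphere there are points `P₁, P₂` of the sphere with
`dist B P₁ = dist B P₂ = 1` and `dist P₁ P₂ = (k+2)/(k+3)`. -/
theorem exists_two_close_points_on_sphere (k : ℕ) (hk : 4 ≤ k)
    (A : EuclideanSpace ℝ (Fin k))
    (B : EuclideanSpace ℝ (Fin k)) (hB : B ∈ Metric.sphere A ((k : ℝ) + 2)) :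
    ∃ P₁ ∈ Metric.sphere A ((k : ℝ) + 2), ∃ P₂ ∈ Metric.sphere A ((k : ℝ) + 2),
      dist B P₁ = 1 ∧ dist B P₂ = 1 ∧ dist P₁ P₂ = ((k : ℝ) + 2) / ((k : ℝ) + 3) := by
  set R : ℝ := (k : ℝ) + 2 with hRdef
  have hk4 : (4 : ℝ) ≤ (k : ℝ) := by exact_mod_cast hk
  have hR6 : (6 : ℝ) ≤ R := by rw [hRdef]; linarith
  have hRpos : (0 : ℝ) < R := by linarith
  have hBA : ‖B - A‖ = R := by
    rw [← dist_eq_norm]; exact Metric.mem_sphere.mp hB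
  set u : EuclideanSpace ℝ (Fin k) := R⁻¹ • (B - A) with hudef
  have hu : ‖u‖ = 1 := by
    rw [hudef, norm_smul, hBA, norm_inv, Real.norm_of_nonneg hRpos.le]
    field_simp
  have hBAu : B = A + R • u := by
    rw [hudef, smul_smul, mul_inv_cancel₀ hRpos.ne', one_smul]
    abel
  obtain ⟨v, w, hv, hw, huv, huw, hvw⟩ := exists_orthonormal_pair (by omega) u
  -- the scalars
  set d : ℝ := R / (R + 1) with hddef
  have hdpos : 0 < d := div_pos hRpos (by linarith)
  have hd1 : d ≤ 1 := by rw [hddef, div_le_one (by linarith)]; linarith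
  set x : ℝ := (2 * R ^ 2 - 1) / (2 * R) with hxdef
  set y : ℝ := Real.sqrt (4 * R ^ 2 - 1) / (2 * R) with hydef
  have h4R : (0 : ℝ) < 4 * R ^ 2 - 1 := by nlinarith
  have hy2 : y ^ 2 = (4 * R ^ 2 - 1) / (4 * R ^ 2) := by
    rw [hydef, div_pow, Real.sq_sqrt h4R.le]
    congr 1; ring
  have hypos : 0 < y := div_pos (Real.sqrt_pos.mpr h4R) (by linarith)
  set c : ℝ := 1 - 2 * R ^ 2 * d ^ 2 / (4 * R ^ 2 - 1) with hcdef
  have ht0 : 0 ≤ 2 * R ^ 2 * d ^ 2 / (4 * R ^ 2 - 1) := by positivity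
  have hd2 : d ^ 2 ≤ 1 := by nlinarith
  have ht1 : 2 * R ^ 2 * d ^ 2 / (4 * R ^ 2 - 1) ≤ 1 := by
    rw [div_le_one h4R]
    nlinarith [hd2, hR6, sq_nonneg d]
  have hc0 : 0 ≤ c := by rw [hcdef]; linarith
  have hc1 : c ≤ 1 := by rw [hcdef]; linarith
  set s : ℝ := Real.sqrt (1 - c ^ 2) with hsdef
  have hs2 : s ^ 2 = 1 - c ^ 2 := Real.sq_sqrt (by nlinarith)
  have hkey : y ^ 2 * (2 - 2 * c) = d ^ 2 := by
    rw [hy2, hcdef]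
    field_simp
    ring
  clear_value R u d x y c s
  -- the two points
  have hv₂norm : ‖c • v + s • w‖ = 1 := by
    have h : ‖c • v + s • w‖ ^ 2 = 1 := by
      rw [norm_comb_sq hv hw hvw c s]; linarith [hs2]
    rw [← Real.sqrt_sq (norm_nonneg (c • v + s • w)), h, Real.sqrt_one]
  have huv₂ : ⟪u, c • v + s • w⟫ = 0 := by
    rw [inner_add_right, real_inner_smul_right, real_inner_smul_right, huv, huw]
    ring
  have hx2y2 : x ^ 2 + y ^ 2 = R ^ 2 := by
    rw [hxdef, hy2]
    field_simp
    ring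
  have hRx : (R - x) ^ 2 + y ^ 2 = 1 := by
    rw [hxdef, hy2]
    field_simp
    ring
  have hsphere : ∀ e : EuclideanSpace ℝ (Fin k), ‖e‖ = 1 → ⟪u, e⟫ = 0 →
      A + x • u + y • e ∈ Metric.sphere A R := by
    intro e he hue
    rw [Metric.mem_sphere, dist_eq_norm]
    have h1 : A + x • u + y • e - A = x • u + y • e := by abel
    have h2 : ‖x • u + y • e‖ ^ 2 = R ^ 2 := by
      rw [norm_comb_sq hu he hue]; exact hx2y2
    rw [h1, ← Real.sqrt_sq (norm_nonneg (x • u + y • e)), h2, Real.sqrt_sq hRpos.le]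
  have hdist : ∀ e : EuclideanSpace ℝ (Fin k), ‖e‖ = 1 → ⟪u, e⟫ = 0 →
      dist B (A + x • u + y • e) = 1 := by
    intro e he hue
    rw [dist_eq_norm]
    have h1 : B - (A + x • u + y • e) = (R - x) • u + (-y) • e := by
      rw [hBAu, sub_smul, neg_smul]; abel
    have h2 : ‖(R - x) • u + (-y) • e‖ ^ 2 = 1 := by
      rw [norm_comb_sq hu he hue]
      nlinarith [hRx]
    rw [h1, ← Real.sqrt_sq (norm_nonneg ((R - x) • u + (-y) • e)), h2, Real.sqrt_one]
  refine ⟨A + x • u + y • v, hsphere v hv huv,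
    A + x • u + y • (c • v + s • w), hsphere _ hv₂norm huv₂,
    hdist v hv huv, hdist _ hv₂norm huv₂, ?_⟩
  have hgoal : R / ((k : ℝ) + 3) = d := by
    rw [hddef, hRdef]; ring_nf
  rw [hgoal, dist_eq_norm]
  have h1 : A + x • u + y • v - (A + x • u + y • (c • v + s • w)) =
      (y - y * c) • v + (-(y * s)) • w := by
    rw [smul_add, smul_smul y c, smul_smul y s, sub_smul, neg_smul]; abel
  have h2 : ‖(y - y * c) • v + (-(y * s)) • w‖ ^ 2 = d ^ 2 := by
    rw [norm_comb_sq hv hw hvw]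
    nlinarith [hkey, hs2]
  rw [h1, ← Real.sqrt_sq (norm_nonneg ((y - y * c) • v + (-(y * s)) • w)), h2,
    Real.sqrt_sq hdpos.le]
end
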